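/- Let λ ≥ 0 and let f ∈ M_σ^λ(φ) have Taylor coefficients aₙ. Set D₁ = B₁² + (1+λ)(B₁−B₂). If (1+λ)B₁ ≤ |D₁|, then |a₃| ≤ (B₁/(2(1+2λ)(1+λ)|D₁|)) · min{ (1/2)·( |(3+5λ)B₁² + (1+λ)²(B₁−B₂)| + |(1+3λ)B₁² − (1+λ)²(B₁−B₂)| ), ( |(1+3λ)B₁² − (1+λ)²(B₁−B₂)| + |(1+λ)B₁² + (1+λ)²(B₁−B₂)| ) }. -/

import Mathlib

open Metric Set Filter Topology

noncomputable section

lemma deriv_eqOn_open {F G : ℂ → ℂ} {U : Set ℂ} (hU : IsOpen U) (h : Set.EqOn F G U)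
    {x : ℂ} (hx : x ∈ U) : deriv F x = deriv G x :=
  Filter.EventuallyEq.deriv_eq (Filter.eventuallyEq_of_mem (hU.mem_nhds hx) h)


set_option maxHeartbeats 2000000 in
lemma final_algebra (lam B₁ : ℝ) (hlam : 0 ≤ lam) (hB₁ : 0 < B₁)
    (B₂ D₁ A₂ A₃ c₁ c₂ d₁ d₂ : ℂ)
    (hD₁ : D₁ = (B₁:ℂ)^2 + (1+(lam:ℂ))*((B₁:ℂ)-B₂))
    (hD₁0 : D₁ ≠ 0)
    (hF1 : (1+(lam:ℂ)) * A₂ = (B₁:ℂ) * c₁)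
    (hF2 : 2*(1+2*(lam:ℂ)) * A₃ - (1+3*(lam:ℂ)) * A₂^2 = (B₁:ℂ)*c₂ + B₂*c₁^2)
    (hF3 : (1+(lam:ℂ)) * (-A₂) = (B₁:ℂ) * d₁)
    (hF4 : 2*(1+2*(lam:ℂ)) * (2*A₂^2 - A₃) - (1+3*(lam:ℂ)) * A₂^2 = (B₁:ℂ)*d₂ + B₂*d₁^2)
    (hc2 : (norm : ℂ → ℝ) c₂ ≤ 1 - ((norm : ℂ → ℝ) c₁)^2)
    (hd2 : (norm : ℂ → ℝ) d₂ ≤ 1 - ((norm : ℂ → ℝ) d₁)^2) :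
    (norm : ℂ → ℝ) A₃ ≤ B₁ / (2*(1+2*lam)*(1+lam)*(norm : ℂ → ℝ) D₁) * min
      (1/2 * ((norm : ℂ → ℝ) ((3+5*(lam:ℂ))*(B₁:ℂ)^2 + (1+(lam:ℂ))^2*((B₁:ℂ)-B₂)) + (norm : ℂ → ℝ) ((1+3*(lam:ℂ))*(B₁:ℂ)^2 - (1+(lam:ℂ))^2*((B₁:ℂ)-B₂))))
      ((norm : ℂ → ℝ) ((1+3*(lam:ℂ))*(B₁:ℂ)^2 - (1+(lam:ℂ))^2*((B₁:ℂ)-B₂)) + (norm : ℂ → ℝ) ((1+(lam:ℂ))*(B₁:ℂ)^2 + (1+(lam:ℂ))^2*((B₁:ℂ)-B₂))) := by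
  have ht : (0:ℝ) < 1 + lam := by linarith
  have hμ : (0:ℝ) < 1 + 2*lam := by linarith
  have hDa : 0 < (norm : ℂ → ℝ) D₁ := norm_pos_iff.mpr hD₁0
  have htC : ((1:ℂ)+(lam:ℂ)) ≠ 0 := by
    intro h
    have := congrArg Complex.re h
    simp at this
    linarith
  have hB₁C : ((B₁:ℝ):ℂ) ≠ 0 := Complex.ofReal_ne_zero.mpr hB₁.ne'
  have hd₁ : d₁ = -c₁ := by
    have h : (B₁:ℂ) * (d₁ + c₁) = 0 := by linear_combination -hF1 - hF3
    rcases mul_eq_zero.mp h with h' | h'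
    · exact absurd h' hB₁C
    · exact eq_neg_of_add_eq_zero_left h'
  subst hd₁
  set tC : ℂ := 1 + (lam:ℂ) with htCdef
  set μC : ℂ := 1 + 2*(lam:ℂ) with hμCdef
  have hA₂ : tC^2 * A₂^2 = (B₁:ℂ)^2 * c₁^2 := by
    linear_combination (tC*A₂ + (B₁:ℂ)*c₁) * hF1
  have hsum : tC * (B₁:ℂ) * (c₂ + d₂) = 2*c₁^2*(D₁ - tC*(B₁:ℂ)) := by
    have h' : tC * (tC * (B₁:ℂ) * (c₂ + d₂)) = tC * (2*c₁^2*(D₁ - tC*(B₁:ℂ))) := by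
      linear_combination -tC^2*hF2 - tC^2*hF4 + 2*tC*hA₂ - 2*tC*c₁^2*hD₁
    exact mul_left_cancel₀ htC h'
  have hK3 : 4*μC*(A₃ - A₂^2) = (B₁:ℂ)*(c₂ - d₂) := by
    linear_combination hF2 - hF4
  set Pc : ℂ := 2*μC*(B₁:ℂ)^2 - tC*D₁ with hPcdef
  set Qc : ℂ := 2*μC*(B₁:ℂ)^2 + tC*D₁ with hQcdef
  have hH1 : 4*μC*tC^3*D₁*A₃ = tC^2*(B₁:ℂ)*(Qc*c₂ + Pc*d₂) + 4*μC*tC^2*(B₁:ℂ)^3*c₁^2 := by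
    rw [hPcdef, hQcdef]
    linear_combination tC^3*D₁*hK3 + 4*μC*tC*D₁*hA₂ - 2*μC*tC*(B₁:ℂ)^2*hsum
  have hH2 : tC^2*(2*μC*A₃) = tC^2*(B₁:ℂ)*c₂ + c₁^2*(Pc + tC^2*(B₁:ℂ)) := by
    rw [hPcdef]
    linear_combination (tC^2/2)*hK3 + 2*μC*hA₂ - (tC/2)*hsum
  -- real abbreviations
  set s : ℝ := (norm : ℂ → ℝ) c₁ ^ 2 with hsdef
  have hs0 : 0 ≤ s := by positivity
  have hd2' : (norm : ℂ → ℝ) d₂ ≤ 1 - s := by simpa using hd2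
  have hc2' : (norm : ℂ → ℝ) c₂ ≤ 1 - s := hc2
  have hs1 : s ≤ 1 := by nlinarith [norm_nonneg c₂]
  set Pa : ℝ := (norm : ℂ → ℝ) Pc with hPadef
  set Qa : ℝ := (norm : ℂ → ℝ) Qc with hQadef
  have hPa0 : 0 ≤ Pa := norm_nonneg _
  have hQa0 : 0 ≤ Qa := norm_nonneg _
  have habst : (norm : ℂ → ℝ) tC = 1 + lam := by
    rw [htCdef, show (1:ℂ)+(lam:ℂ) = ((1+lam:ℝ):ℂ) by push_cast; ring,
      Complex.norm_real, Real.norm_eq_abs, abs_of_pos ht]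
  have habsμ : (norm : ℂ → ℝ) μC = 1 + 2*lam := by
    rw [hμCdef, show (1:ℂ)+2*(lam:ℂ) = ((1+2*lam:ℝ):ℂ) by push_cast; ring,
      Complex.norm_real, Real.norm_eq_abs, abs_of_pos hμ]
  have habsB : (norm : ℂ → ℝ) ((B₁:ℝ):ℂ) = B₁ := by
    rw [Complex.norm_real, Real.norm_eq_abs, abs_of_pos hB₁]
  have habsc₁ : (norm : ℂ → ℝ) (c₁^2) = s := by rw [norm_pow]
  -- triangle: Qa + Pa ≥ 4 μ B₁²
  have htri : 4*(1+2*lam)*B₁^2 ≤ Qa + Pa := by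
    have h1 : (norm : ℂ → ℝ) (Qc + Pc) ≤ Qa + Pa := norm_add_le _ _
    have h2 : Qc + Pc = ((4*(1+2*lam)*B₁^2 : ℝ):ℂ) := by
      rw [hQcdef, hPcdef, hμCdef]; push_cast; ring
    rw [h2, Complex.norm_real, Real.norm_eq_abs, abs_of_pos (by positivity)] at h1
    exact h1
  -- s * |D₁| ≤ (1+lam) B₁
  have hsD : s * (norm : ℂ → ℝ) D₁ ≤ (1+lam)*B₁ := by
    have e1 := congrArg (norm : ℂ → ℝ) hsum
    rw [norm_mul, norm_mul, habst, habsB] at e1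
    rw [norm_mul, norm_mul, habsc₁, Complex.norm_two] at e1
    have h3 : (norm : ℂ → ℝ) (c₂ + d₂) ≤ (1-s) + (1-s) :=
      le_trans (norm_add_le _ _) (add_le_add hc2' hd2')
    have h4 : (norm : ℂ → ℝ) D₁ ≤ (norm : ℂ → ℝ) (D₁ - tC*(B₁:ℂ)) + (1+lam)*B₁ := by
      calc (norm : ℂ → ℝ) D₁ = (norm : ℂ → ℝ) ((D₁ - tC*(B₁:ℂ)) + tC*(B₁:ℂ)) := by ring_nf
        _ ≤ (norm : ℂ → ℝ) (D₁ - tC*(B₁:ℂ)) + (norm : ℂ → ℝ) (tC*(B₁:ℂ)) := norm_add_le _ _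
        _ = (norm : ℂ → ℝ) (D₁ - tC*(B₁:ℂ)) + (1+lam)*B₁ := by rw [norm_mul, habst, habsB]
    nlinarith [mul_le_mul_of_nonneg_left h4 hs0, e1,
      mul_le_mul_of_nonneg_left h3 (show (0:ℝ) ≤ (1+lam)*B₁ by positivity)]
  -- fact 1 (branch 1)
  have fact1 : 4*(1+2*lam)*(1+lam)^3*((norm : ℂ → ℝ) D₁)*((norm : ℂ → ℝ) A₃)
      ≤ (1+lam)^2*B₁*(Qa+Pa) := by
    have e1 := congrArg (norm : ℂ → ℝ) hH1
    have lhs1 : (norm : ℂ → ℝ) (4*μC*tC^3*D₁*A₃)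
        = 4*(1+2*lam)*(1+lam)^3*((norm : ℂ → ℝ) D₁)*((norm : ℂ → ℝ) A₃) := by
      simp only [norm_mul, norm_pow, habst, habsμ, Complex.norm_ofNat]
      try ring
    have rhs1 : (norm : ℂ → ℝ) (tC^2*(B₁:ℂ)*(Qc*c₂ + Pc*d₂) + 4*μC*tC^2*(B₁:ℂ)^3*c₁^2)
        ≤ (1+lam)^2*B₁*(Qa*(1-s) + Pa*(1-s)) + 4*(1+2*lam)*(1+lam)^2*B₁^3*s := by
      calc (norm : ℂ → ℝ) (tC^2*(B₁:ℂ)*(Qc*c₂ + Pc*d₂) + 4*μC*tC^2*(B₁:ℂ)^3*c₁^2)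
          ≤ (norm : ℂ → ℝ) (tC^2*(B₁:ℂ)*(Qc*c₂ + Pc*d₂))
            + (norm : ℂ → ℝ) (4*μC*tC^2*(B₁:ℂ)^3*c₁^2) := norm_add_le _ _
        _ ≤ (1+lam)^2*B₁*(Qa*(1-s) + Pa*(1-s)) + 4*(1+2*lam)*(1+lam)^2*B₁^3*s := by
            have a1 : (norm : ℂ → ℝ) (tC^2*(B₁:ℂ)*(Qc*c₂ + Pc*d₂))
                ≤ (1+lam)^2*B₁*(Qa*(1-s) + Pa*(1-s)) := by
              rw [norm_mul, norm_mul, norm_pow, habst, habsB]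
              have : (norm : ℂ → ℝ) (Qc*c₂ + Pc*d₂) ≤ Qa*(1-s) + Pa*(1-s) := by
                calc (norm : ℂ → ℝ) (Qc*c₂ + Pc*d₂)
                    ≤ (norm : ℂ → ℝ) (Qc*c₂) + (norm : ℂ → ℝ) (Pc*d₂) := norm_add_le _ _
                  _ = Qa * (norm : ℂ → ℝ) c₂ + Pa * (norm : ℂ → ℝ) d₂ := by rw [norm_mul, norm_mul]
                  _ ≤ Qa*(1-s) + Pa*(1-s) := by
                      exact add_le_add (mul_le_mul_of_nonneg_left hc2' hQa0)
                        (mul_le_mul_of_nonneg_left hd2' hPa0)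
              exact mul_le_mul_of_nonneg_left this (by positivity)
            have a2 : (norm : ℂ → ℝ) (4*μC*tC^2*(B₁:ℂ)^3*c₁^2)
                = 4*(1+2*lam)*(1+lam)^2*B₁^3*s := by
              simp only [norm_mul, norm_pow, habst, habsμ, habsB, habsc₁, Complex.norm_ofNat]
              try ring
            linarith [a1, a2.le, a2.ge]
    rw [lhs1] at e1
    have h5 := e1.le.trans rhs1
    have h6 := mul_le_mul_of_nonneg_left htri
      (show (0:ℝ) ≤ (1+lam)^2*B₁*s by positivity)
    linarith [h5, h6]
  -- fact 2 (branch 2)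
  have fact2 : 2*(1+2*lam)*(1+lam)^2*((norm : ℂ → ℝ) A₃) ≤ (1+lam)^2*B₁ + s*Pa := by
    have e2 := congrArg (norm : ℂ → ℝ) hH2
    have lhs2 : (norm : ℂ → ℝ) (tC^2*(2*μC*A₃))
        = (1+lam)^2*(2*(1+2*lam))*((norm : ℂ → ℝ) A₃) := by
      simp only [norm_mul, norm_pow, habst, habsμ, Complex.norm_two]
      try ring
    have rhs2 : (norm : ℂ → ℝ) (tC^2*(B₁:ℂ)*c₂ + c₁^2*(Pc + tC^2*(B₁:ℂ)))
        ≤ (1+lam)^2*B₁*(1-s) + s*(Pa + (1+lam)^2*B₁) := by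
      calc (norm : ℂ → ℝ) (tC^2*(B₁:ℂ)*c₂ + c₁^2*(Pc + tC^2*(B₁:ℂ)))
          ≤ (norm : ℂ → ℝ) (tC^2*(B₁:ℂ)*c₂) + (norm : ℂ → ℝ) (c₁^2*(Pc + tC^2*(B₁:ℂ))) :=
            norm_add_le _ _
        _ ≤ (1+lam)^2*B₁*(1-s) + s*(Pa + (1+lam)^2*B₁) := by
            have a1 : (norm : ℂ → ℝ) (tC^2*(B₁:ℂ)*c₂) ≤ (1+lam)^2*B₁*(1-s) := by
              rw [norm_mul, norm_mul, norm_pow, habst, habsB]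
              exact mul_le_mul_of_nonneg_left hc2' (by positivity)
            have a2 : (norm : ℂ → ℝ) (c₁^2*(Pc + tC^2*(B₁:ℂ))) ≤ s*(Pa + (1+lam)^2*B₁) := by
              rw [norm_mul, habsc₁]
              have : (norm : ℂ → ℝ) (Pc + tC^2*(B₁:ℂ)) ≤ Pa + (1+lam)^2*B₁ := by
                calc (norm : ℂ → ℝ) (Pc + tC^2*(B₁:ℂ))
                    ≤ Pa + (norm : ℂ → ℝ) (tC^2*(B₁:ℂ)) := norm_add_le _ _
                  _ = Pa + (1+lam)^2*B₁ := by rw [norm_mul, norm_pow, habst, habsB]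
              exact mul_le_mul_of_nonneg_left this hs0
            linarith
    rw [lhs2] at e2
    have := e2.le.trans rhs2
    nlinarith [this]
  -- rewrite the goal
  have hargQ : (3+5*(lam:ℂ))*(B₁:ℂ)^2 + tC^2*((B₁:ℂ)-B₂) = Qc := by
    rw [hQcdef, hμCdef, hD₁]; push_cast; ring
  have hargP : (1+3*(lam:ℂ))*(B₁:ℂ)^2 - tC^2*((B₁:ℂ)-B₂) = Pc := by
    rw [hPcdef, hμCdef, hD₁]; push_cast; ring
  have hargR : tC*(B₁:ℂ)^2 + tC^2*((B₁:ℂ)-B₂) = tC*D₁ := by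
    rw [hD₁]; push_cast; ring
  have habsR : (norm : ℂ → ℝ) (tC*D₁) = (1+lam)*(norm : ℂ → ℝ) D₁ := by
    rw [norm_mul, habst]
  rw [hargQ, hargP, hargR, habsR]
  rw [div_mul_eq_mul_div, le_div_iff₀ (by positivity)]
  have goal1 : (norm : ℂ → ℝ) A₃ * (2*(1+2*lam)*(1+lam)*(norm : ℂ → ℝ) D₁)
      ≤ B₁ * (1/2*(Qa + Pa)) := by
    have h2 : (0:ℝ) < 2*(1+lam)^2 := by positivity
    rw [← mul_le_mul_iff_right₀ h2]
    linarith [fact1]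
  have goal2 : (norm : ℂ → ℝ) A₃ * (2*(1+2*lam)*(1+lam)*(norm : ℂ → ℝ) D₁)
      ≤ B₁ * (Pa + (1+lam)*(norm : ℂ → ℝ) D₁) := by
    rw [← mul_le_mul_iff_right₀ ht]
    linarith [mul_le_mul_of_nonneg_right fact2 hDa.le,
      mul_le_mul_of_nonneg_right hsD hPa0]
  rcases min_cases (1/2*(Qa + Pa)) (Pa + (1+lam)*(norm : ℂ → ℝ) D₁) with ⟨hm, _⟩ | ⟨hm, _⟩ <;>
    rw [hm]
  · exact goal1
  · exact goal2

lemma schwarz_two (ω : ℂ → ℂ) (hd : DifferentiableOn ℂ ω (ball 0 1)) (h0 : ω 0 = 0)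
    (hmap : ∀ z ∈ ball (0:ℂ) 1, ω z ∈ ball (0:ℂ) 1) :
    (norm : ℂ → ℝ) (deriv ω 0) ≤ 1 ∧
    (norm : ℂ → ℝ) (iteratedDeriv 2 ω 0 / 2) ≤ 1 - ((norm : ℂ → ℝ) (deriv ω 0))^2 := by
  have h01 : (0:ℂ) ∈ ball (0:ℂ) 1 := mem_ball_self one_pos
  have hmap' : MapsTo ω (ball 0 1) (ball (ω 0) 1) := by
    rw [h0]; exact fun z hz => hmap z hz
  set ψ : ℂ → ℂ := dslope ω 0 with hψdef
  have hψb : ∀ z ∈ ball (0:ℂ) 1, (norm : ℂ → ℝ) (ψ z) ≤ 1 := by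
    intro z hz
    have := Complex.norm_dslope_le_div_of_mapsTo_ball hd (hmap'.mono_right ball_subset_closedBall) hz
    simpa using this
  have hψd : DifferentiableOn ℂ ψ (ball 0 1) :=
    (Complex.differentiableOn_dslope (ball_mem_nhds _ one_pos)).mpr hd
  have hψa : AnalyticOnNhd ℂ ψ (ball 0 1) := hψd.analyticOnNhd isOpen_ball
  have hψ0 : ψ 0 = deriv ω 0 := dslope_same ω 0
  have habs1 : (norm : ℂ → ℝ) (deriv ω 0) ≤ 1 := by
    rw [← hψ0]; exact hψb 0 h01
  refine ⟨habs1, ?_⟩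
  -- iteratedDeriv 2 ω 0 = 2 * deriv ψ 0
  have hωz : ω = fun z => z * ψ z := by
    funext z
    by_cases hz : z = 0
    · subst hz; simp [h0]
    · rw [hψdef, dslope_of_ne _ hz, slope_def_field, h0]
      field_simp; ring
  have hder2 : iteratedDeriv 2 ω 0 = 2 * deriv ψ 0 := by
    have e1 : Set.EqOn (deriv ω) (fun z => ψ z + z * deriv ψ z) (ball 0 1) := by
      intro z hz
      rw [hωz]
      have H : HasDerivAt (fun y : ℂ => y * ψ y) (1 * ψ z + z * deriv ψ z) z :=
        (hasDerivAt_id' (x := z)).mul ((hψa z hz).differentiableAt.hasDerivAt)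
      rw [H.deriv]; ring
    have e2 : deriv (deriv ω) 0 = deriv (fun z => ψ z + z * deriv ψ z) 0 :=
      deriv_eqOn_open isOpen_ball e1 h01
    have hψ'a : AnalyticOnNhd ℂ (deriv ψ) (ball 0 1) := hψa.deriv
    have e3 : deriv (fun z => ψ z + z * deriv ψ z) 0 = 2 * deriv ψ 0 := by
      have h1 : HasDerivAt (fun z => ψ z + z * deriv ψ z)
          (deriv ψ 0 + ((1 : ℂ) * deriv ψ 0 + 0 * deriv (deriv ψ) 0)) 0 := by
        exact ((hψa 0 h01).differentiableAt.hasDerivAt).add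
          ((hasDerivAt_id 0).mul ((hψ'a 0 h01).differentiableAt.hasDerivAt))
      have := h1.deriv
      rw [this]; ring
    rw [iteratedDeriv_succ, iteratedDeriv_one, e2, e3]
  rw [hder2]
  have habs2 : (norm : ℂ → ℝ) (2 * deriv ψ 0 / 2) = (norm : ℂ → ℝ) (deriv ψ 0) := by
    congr 1; ring
  rw [habs2, ← hψ0]
  -- Schwarz–Pick at the origin for ψ
  by_cases hconst : ∃ z₀ ∈ ball (0:ℂ) 1, 1 ≤ (norm : ℂ → ℝ) (ψ z₀)
  · obtain ⟨z₀, hz₀, hz₀1⟩ := hconst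
    have hmax : IsMaxOn (norm ∘ ψ) (ball 0 1) z₀ := by
      intro z hz
      simp only [Function.comp_apply, Set.mem_setOf_eq]
      calc ‖ψ z‖ ≤ 1 := hψb z hz
        _ ≤ ‖ψ z₀‖ := hz₀1
    have heq : Set.EqOn ψ (Function.const ℂ (ψ z₀)) (ball 0 1) :=
      Complex.eqOn_of_isPreconnected_of_isMaxOn_norm (convex_ball (0:ℂ) 1).isPreconnected
        isOpen_ball hψd hz₀ hmax
    have : deriv ψ 0 = 0 := by
      rw [deriv_eqOn_open isOpen_ball heq h01]
      exact deriv_const _ _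
    rw [this]
    simp only [norm_zero]
    nlinarith [norm_nonneg (ψ 0), hψb 0 h01]
  · push_neg at hconst
    set a : ℂ := ψ 0 with hadef
    have ha : (norm : ℂ → ℝ) a < 1 := hconst 0 h01
    have hna : Complex.normSq a < 1 := by
      rw [← Complex.sq_norm] at *; nlinarith [norm_nonneg a]
    have hden : ∀ z ∈ ball (0:ℂ) 1, 1 - (starRingEnd ℂ) a * ψ z ≠ 0 := by
      intro z hz h
      have h1 : (1:ℂ) = (starRingEnd ℂ) a * ψ z := by linear_combination h
      have h2 : (1:ℝ) = (norm : ℂ → ℝ) ((starRingEnd ℂ) a * ψ z) := by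
        rw [← h1]; simp
      rw [norm_mul, Complex.norm_conj] at h2
      nlinarith [hψb z hz, norm_nonneg (ψ z), norm_nonneg a, hconst z hz]
    set h : ℂ → ℂ := fun z => (ψ z - a)/(1 - (starRingEnd ℂ) a * ψ z) with hhdef
    have hh0 : h 0 = 0 := by simp [hhdef, hadef]
    have hhd : DifferentiableOn ℂ h (ball 0 1) := by
      apply DifferentiableOn.div
      · exact hψd.sub (differentiableOn_const a)
      · exact (differentiableOn_const 1).sub ((differentiableOn_const _).mul hψd)
      · exact hden
    have key : ∀ z ∈ ball (0:ℂ) 1,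
        Complex.normSq (1 - (starRingEnd ℂ) a * ψ z) - Complex.normSq (ψ z - a)
          = (1 - Complex.normSq a) * (1 - Complex.normSq (ψ z)) := by
      intro z hz
      simp only [Complex.normSq_apply, Complex.sub_re, Complex.sub_im, Complex.mul_re,
        Complex.mul_im, Complex.one_re, Complex.one_im, Complex.conj_re, Complex.conj_im]
      ring
    have hmapsh : MapsTo h (ball 0 1) (ball (h 0) 1) := by
      rw [hh0]
      intro z hz
      rw [mem_ball, Complex.dist_eq, sub_zero]
      have hp : (norm : ℂ → ℝ) (ψ z) < 1 := hconst z hz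
      have hnp : Complex.normSq (ψ z) < 1 := by
        rw [← Complex.sq_norm] at *; nlinarith [norm_nonneg (ψ z)]
      have hlt : Complex.normSq (ψ z - a) < Complex.normSq (1 - (starRingEnd ℂ) a * ψ z) := by
        nlinarith [key z hz]
      have hd0 : (norm : ℂ → ℝ) (1 - (starRingEnd ℂ) a * ψ z) ≠ 0 :=
        norm_ne_zero_iff.mpr (hden z hz)
      rw [hhdef]
      simp only [norm_div]
      rw [div_lt_one (lt_of_le_of_ne (norm_nonneg _) (Ne.symm hd0))]
      have := Real.sqrt_lt_sqrt (Complex.normSq_nonneg _) hlt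
      rwa [← Complex.norm_def, ← Complex.norm_def] at this
    have hschwarz := Complex.norm_deriv_le_div_of_mapsTo_ball hhd (hmapsh.mono_right ball_subset_closedBall) one_pos
    rw [div_one] at hschwarz
    -- compute deriv h 0
    have hψ'0 : HasDerivAt ψ (deriv ψ 0) 0 := (hψa 0 h01).differentiableAt.hasDerivAt
    have hnum : HasDerivAt (fun z => ψ z - a) (deriv ψ 0) 0 := hψ'0.sub_const a
    have hdenD : HasDerivAt (fun z => 1 - (starRingEnd ℂ) a * ψ z)
        (-((starRingEnd ℂ) a * deriv ψ 0)) 0 := by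
      simpa using (hψ'0.const_mul ((starRingEnd ℂ) a)).const_sub 1
    have hd00 : (1 - (starRingEnd ℂ) a * ψ 0) ≠ 0 := hden 0 h01
    have hdiv := hnum.div hdenD hd00
    have hderivh : deriv h 0 = deriv ψ 0 / (1 - (starRingEnd ℂ) a * a) := by
      rw [show deriv h 0 = _ from hdiv.deriv]
      rw [← hadef]
      have h00 : ψ 0 - a = 0 := by rw [hadef]; ring
      field_simp [h00, (show (1 - (starRingEnd ℂ) a * a) ≠ 0 from hd00)]
      ring
    rw [hderivh] at hschwarz
    have hca : (starRingEnd ℂ) a * a = (Complex.normSq a : ℂ) := by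
      rw [mul_comm, Complex.mul_conj]
    rw [hca] at hschwarz
    have hre : ((1:ℂ) - (Complex.normSq a : ℂ)) = ((1 - Complex.normSq a : ℝ) : ℂ) := by
      push_cast; ring
    rw [norm_div, hre, Complex.norm_real, Real.norm_eq_abs, abs_of_pos (by linarith)] at hschwarz
    rw [div_le_one (by linarith)] at hschwarz
    calc (norm : ℂ → ℝ) (deriv ψ 0) ≤ 1 - Complex.normSq a := hschwarz
      _ = 1 - (norm : ℂ → ℝ) a ^ 2 := by rw [Complex.sq_norm]

set_option maxHeartbeats 3000000 in
lemma coeff_relations (lam : ℝ) (φ F ω : ℂ → ℂ)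
    (hFd : DifferentiableOn ℂ F (ball 0 1)) (hF0 : F 0 = 0) (hF1 : deriv F 0 = 1)
    (hφd : DifferentiableOn ℂ φ (ball 0 1)) (hφ0 : φ 0 = 1)
    (hωd : DifferentiableOn ℂ ω (ball 0 1)) (hω0 : ω 0 = 0)
    (hωmap : ∀ z ∈ ball (0:ℂ) 1, ω z ∈ ball (0:ℂ) 1)
    (heq : ∀ z ∈ ball (0:ℂ) 1, z ≠ 0 →
      (lam : ℂ) * (1 + z * iteratedDeriv 2 F z / deriv F z)
        + (1 - (lam : ℂ)) * (z * deriv F z / F z) = φ (ω z)) :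
    (1+(lam:ℂ)) * iteratedDeriv 2 F 0 = 2 * deriv φ 0 * deriv ω 0 ∧
    4*(1+2*(lam:ℂ)) * iteratedDeriv 3 F 0 - 3*(1+3*(lam:ℂ)) * (iteratedDeriv 2 F 0)^2
      = 6 * deriv φ 0 * iteratedDeriv 2 ω 0 + 6 * iteratedDeriv 2 φ 0 * (deriv ω 0)^2 := by
  have h01 : (0:ℂ) ∈ ball (0:ℂ) 1 := mem_ball_self one_pos
  have hFa0 : AnalyticOnNhd ℂ F (ball 0 1) := hFd.analyticOnNhd isOpen_ball
  have hFa1 : AnalyticOnNhd ℂ (deriv F) (ball 0 1) := hFa0.deriv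
  have hFa2 : AnalyticOnNhd ℂ (deriv (deriv F)) (ball 0 1) := hFa1.deriv
  have hFa3 : AnalyticOnNhd ℂ (deriv (deriv (deriv F))) (ball 0 1) := hFa2.deriv
  have hFa4 : AnalyticOnNhd ℂ (deriv (deriv (deriv (deriv F)))) (ball 0 1) := hFa3.deriv
  have hWa0 : AnalyticOnNhd ℂ ω (ball 0 1) := hωd.analyticOnNhd isOpen_ball
  have hWa1 : AnalyticOnNhd ℂ (deriv ω) (ball 0 1) := hWa0.deriv
  have hWa2 : AnalyticOnNhd ℂ (deriv (deriv ω)) (ball 0 1) := hWa1.deriv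
  have hPa0 : AnalyticOnNhd ℂ φ (ball 0 1) := hφd.analyticOnNhd isOpen_ball
  have hPa1 : AnalyticOnNhd ℂ (deriv φ) (ball 0 1) := hPa0.deriv
  have hPa2 : AnalyticOnNhd ℂ (deriv (deriv φ)) (ball 0 1) := hPa1.deriv
  have hne : ∀ᶠ z in 𝓝 (0:ℂ), (z ≠ 0 → F z ≠ 0) := by
    rcases (hFa0 0 h01).eventually_eq_zero_or_eventually_ne_zero with h | h
    · exfalso
      have h2 : deriv F 0 = deriv (fun _ : ℂ => (0:ℂ)) 0 := Filter.EventuallyEq.deriv_eq h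
      rw [deriv_const] at h2
      rw [hF1] at h2
      exact one_ne_zero h2
    · rw [eventually_nhdsWithin_iff] at h
      exact h.mono (fun z hz hz0 => hz hz0)
  have hne1 : ∀ᶠ z in 𝓝 (0:ℂ), deriv F z ≠ 0 :=
    (hFa1 0 h01).continuousAt.eventually_ne (by rw [hF1]; exact one_ne_zero)
  have hball : ∀ᶠ z in 𝓝 (0:ℂ), z ∈ ball (0:ℂ) 1 :=
    Filter.eventually_of_mem (isOpen_ball.mem_nhds h01) (fun x hx => hx)
  obtain ⟨r, hr, hrp⟩ := Metric.eventually_nhds_iff_ball.mp ((hne.and hne1).and hball)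
  set U : Set ℂ := ball (0:ℂ) r with hUdef
  have hUo : IsOpen U := isOpen_ball
  have h0U : (0:ℂ) ∈ U := mem_ball_self hr
  have hU1 : ∀ z ∈ U, z ∈ ball (0:ℂ) 1 := fun z hz => (hrp z hz).2
  have hUF : ∀ z ∈ U, z ≠ 0 → F z ≠ 0 := fun z hz => (hrp z hz).1.1
  have hUF1 : ∀ z ∈ U, deriv F z ≠ 0 := fun z hz => (hrp z hz).1.2
  have hωmem : ∀ z ∈ U, ω z ∈ ball (0:ℂ) 1 := fun z hz => hωmap z (hU1 z hz)
  set T0 : ℂ → ℂ := fun z => ((((lam:ℂ) * (((deriv (F) z) * (F z)) + ((z * (deriv (deriv (F)) z)) * (F z)))) + ((1-(lam:ℂ)) * ((z * (deriv (F) z)) * (deriv (F) z)))) - (((φ (ω z)) * (deriv (F) z)) * (F z))) with hT0def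
  have hc0 : Set.EqOn T0 (fun _ => (0:ℂ)) U := by
    intro z hz
    by_cases hz0 : z = 0
    · subst hz0; simp [hT0def, hF0]
    · have h := heq z (hU1 z hz) hz0
      rw [show iteratedDeriv 2 F = deriv (deriv F) by
        rw [iteratedDeriv_succ, iteratedDeriv_one]] at h
      have hFz := hUF z hz hz0
      have hF1z := hUF1 z hz
      have key : T0 z = ((lam:ℂ) * (1 + z * deriv (deriv F) z / deriv F z)
          + (1 - (lam:ℂ)) * (z * deriv F z / F z) - φ (ω z)) * (deriv F z * F z) := by
        rw [hT0def]; field_simp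
      rw [key, h, sub_self, zero_mul]
  set T1 : ℂ → ℂ := fun z => ((((lam:ℂ) * ((((deriv (deriv (F)) z) * (F z)) + ((deriv (F) z) * (deriv (F) z))) + ((((deriv (deriv (F)) z) + (z * (deriv (deriv (deriv (F))) z))) * (F z)) + ((z * (deriv (deriv (F)) z)) * (deriv (F) z))))) + ((1-(lam:ℂ)) * ((((deriv (F) z) + (z * (deriv (deriv (F)) z))) * (deriv (F) z)) + ((z * (deriv (F) z)) * (deriv (deriv (F)) z))))) - ((((((deriv (φ) (ω z)) * (deriv (ω) z)) * (deriv (F) z)) + ((φ (ω z)) * (deriv (deriv (F)) z))) * (F z)) + (((φ (ω z)) * (deriv (F) z)) * (deriv (F) z)))) with hT1def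
  have hd0 : Set.EqOn (deriv T0) T1 U := by
    intro z hz
    have H : HasDerivAt T0 (((((lam:ℂ) * ((((deriv (deriv (F)) z) * (F z)) + ((deriv (F) z) * (deriv (F) z))) + ((((deriv (deriv (F)) z) + (z * (deriv (deriv (deriv (F))) z))) * (F z)) + ((z * (deriv (deriv (F)) z)) * (deriv (F) z))))) + ((1-(lam:ℂ)) * ((((deriv (F) z) + (z * (deriv (deriv (F)) z))) * (deriv (F) z)) + ((z * (deriv (F) z)) * (deriv (deriv (F)) z))))) - ((((((deriv (φ) (ω z)) * (deriv (ω) z)) * (deriv (F) z)) + ((φ (ω z)) * (deriv (deriv (F)) z))) * (F z)) + (((φ (ω z)) * (deriv (F) z)) * (deriv (F) z))))) z := by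
      rw [hT0def]
      exact HasDerivAt.congr_deriv
        ((((hasDerivAt_const z ((lam:ℂ))).mul ((((hFa1 z (hU1 z hz)).differentiableAt.hasDerivAt).mul ((hFa0 z (hU1 z hz)).differentiableAt.hasDerivAt)).add (((hasDerivAt_id' z).mul ((hFa2 z (hU1 z hz)).differentiableAt.hasDerivAt)).mul ((hFa0 z (hU1 z hz)).differentiableAt.hasDerivAt)))).add ((hasDerivAt_const z ((1-(lam:ℂ)))).mul (((hasDerivAt_id' z).mul ((hFa1 z (hU1 z hz)).differentiableAt.hasDerivAt)).mul ((hFa1 z (hU1 z hz)).differentiableAt.hasDerivAt)))).sub (((((hPa0 (ω z) (hωmem z hz)).differentiableAt.hasDerivAt).comp z ((hWa0 z (hU1 z hz)).differentiableAt.hasDerivAt)).mul ((hFa1 z (hU1 z hz)).differentiableAt.hasDerivAt)).mul ((hFa0 z (hU1 z hz)).differentiableAt.hasDerivAt)))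
        (by try simp only [Function.comp_apply, Pi.mul_apply, Pi.add_apply, Pi.sub_apply]; try ring)
    exact H.deriv
  have hc1 : Set.EqOn T1 (fun _ => (0:ℂ)) U := by
    intro z hz
    have h1 : deriv T0 z = 0 := by
      rw [deriv_eqOn_open hUo hc0 hz]; exact deriv_const _ _
    exact ((hd0 hz).symm.trans h1)
  set T2 : ℂ → ℂ := fun z => ((((lam:ℂ) * (((((deriv (deriv (deriv (F))) z) * (F z)) + ((deriv (deriv (F)) z) * (deriv (F) z))) + (((deriv (deriv (F)) z) * (deriv (F) z)) + ((deriv (F) z) * (deriv (deriv (F)) z)))) + (((((deriv (deriv (deriv (F))) z) + ((deriv (deriv (deriv (F))) z) + (z * (deriv (deriv (deriv (deriv (F)))) z)))) * (F z)) + (((deriv (deriv (F)) z) + (z * (deriv (deriv (deriv (F))) z))) * (deriv (F) z))) + ((((deriv (deriv (F)) z) + (z * (deriv (deriv (deriv (F))) z))) * (deriv (F) z)) + ((z * (deriv (deriv (F)) z)) * (deriv (deriv (F)) z)))))) + ((1-(lam:ℂ)) * (((((deriv (deriv (F)) z) + ((deriv (deriv (F)) z) + (z * (deriv (deriv (deriv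 (F))) z)))) * (deriv (F) z)) + (((deriv (F) z) + (z * (deriv (deriv (F)) z))) * (deriv (deriv (F)) z))) + ((((deriv (F) z) + (z * (deriv (deriv (F)) z))) * (deriv (deriv (F)) z)) + ((z * (deriv (F) z)) * (deriv (deriv (deriv (F))) z)))))) - ((((((((((deriv (deriv (φ)) (ω z)) * (deriv (ω) z)) * (deriv (ω) z)) + ((deriv (φ) (ω z)) * (deriv (deriv (ω)) z))) * (deriv (F) z)) + (((deriv (φ) (ω z)) * (deriv (ω) z)) * (deriv (deriv (F)) z))) + ((((deriv (φ) (ω z)) * (deriv (ω) z)) * (deriv (deriv (F)) z)) + ((φ (ω z)) * (deriv (deriv (deriv (F))) z)))) * (F z)) + (((((deriv (φ) (ω z)) * (deriv (ω) z)) * (deriv (F) z)) + ((φ (ω z)) * (deriv (deriv (F)) z))) * (deriv (F) z))) + ((((((deriv (φ) (ω z)) * (deriv (ω) z)) * (deriv (F) z)) + ((φ (ω z)) * (deriv (deriv (F)) z))) * (deriv (F) z)) + (((φ (ω z)) * (deriv (F) z)) * (deriv (deriv (F)) z))))) with hT2def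
  have hd1 : Set.EqOn (deriv T1) T2 U := by
    intro z hz
    have H : HasDerivAt T1 (((((lam:ℂ) * (((((deriv (deriv (deriv (F))) z) * (F z)) + ((deriv (deriv (F)) z) * (deriv (F) z))) + (((deriv (deriv (F)) z) * (deriv (F) z)) + ((deriv (F) z) * (deriv (deriv (F)) z)))) + (((((deriv (deriv (deriv (F))) z) + ((deriv (deriv (deriv (F))) z) + (z * (deriv (deriv (deriv (deriv (F)))) z)))) * (F z)) + (((deriv (deriv (F)) z) + (z * (deriv (deriv (deriv (F))) z))) * (deriv (F) z))) + ((((deriv (deriv (F)) z) + (z * (deriv (deriv (deriv (F))) z))) * (deriv (F) z)) + ((z * (deriv (deriv (F)) z)) * (deriv (deriv (F)) z)))))) + ((1-(lam:ℂ)) * (((((deriv (deriv (F)) z) + ((deriv (deriv (F)) z) + (z * (deriv (deriv (deriv (F))) z)))) * (deriv (F) z)) + (((deriv (F) z) + (z * (deriv (deriv (F)) z))) * (deriv (deriv (F)) z))) + ((((deriv (F) z) + (z * (deriv (deriv (F)) z))) * (deriv (deriv (F)) z)) + ((z * (deriv (F) z)) * (deriv (deriv (deriv (F))) z)))))) - ((((((((((deriv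 (deriv (φ)) (ω z)) * (deriv (ω) z)) * (deriv (ω) z)) + ((deriv (φ) (ω z)) * (deriv (deriv (ω)) z))) * (deriv (F) z)) + (((deriv (φ) (ω z)) * (deriv (ω) z)) * (deriv (deriv (F)) z))) + ((((deriv (φ) (ω z)) * (deriv (ω) z)) * (deriv (deriv (F)) z)) + ((φ (ω z)) * (deriv (deriv (deriv (F))) z)))) * (F z)) + (((((deriv (φ) (ω z)) * (deriv (ω) z)) * (deriv (F) z)) + ((φ (ω z)) * (deriv (deriv (F)) z))) * (deriv (F) z))) + ((((((deriv (φ) (ω z)) * (deriv (ω) z)) * (deriv (F) z)) + ((φ (ω z)) * (deriv (deriv (F)) z))) * (deriv (F) z)) + (((φ (ω z)) * (deriv (F) z)) * (deriv (deriv (F)) z)))))) z := by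
      rw [hT1def]
      exact HasDerivAt.congr_deriv
        ((((hasDerivAt_const z ((lam:ℂ))).mul (((((hFa2 z (hU1 z hz)).differentiableAt.hasDerivAt).mul ((hFa0 z (hU1 z hz)).differentiableAt.hasDerivAt)).add (((hFa1 z (hU1 z hz)).differentiableAt.hasDerivAt).mul ((hFa1 z (hU1 z hz)).differentiableAt.hasDerivAt))).add (((((hFa2 z (hU1 z hz)).differentiableAt.hasDerivAt).add ((hasDerivAt_id' z).mul ((hFa3 z (hU1 z hz)).differentiableAt.hasDerivAt))).mul ((hFa0 z (hU1 z hz)).differentiableAt.hasDerivAt)).add (((hasDerivAt_id' z).mul ((hFa2 z (hU1 z hz)).differentiableAt.hasDerivAt)).mul ((hFa1 z (hU1 z hz)).differentiableAt.hasDerivAt))))).add ((hasDerivAt_const z ((1-(lam:ℂ)))).mul (((((hFa1 z (hU1 z hz)).differentiableAt.hasDerivAt).add ((hasDerivAt_id' z).mul ((hFa2 z (hU1 z hz)).differentiableAt.hasDerivAt))).mul ((hFa1 z (hU1 z hz)).differentiableAt.hasDerivAt)).add (((hasDerivAt_id' z).mul ((hFa1 z (hU1 z hz)).differentiableAt.hasDerivAt)).mul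 ((hFa2 z (hU1 z hz)).differentiableAt.hasDerivAt))))).sub ((((((((hPa1 (ω z) (hωmem z hz)).differentiableAt.hasDerivAt).comp z ((hWa0 z (hU1 z hz)).differentiableAt.hasDerivAt)).mul ((hWa1 z (hU1 z hz)).differentiableAt.hasDerivAt)).mul ((hFa1 z (hU1 z hz)).differentiableAt.hasDerivAt)).add ((((hPa0 (ω z) (hωmem z hz)).differentiableAt.hasDerivAt).comp z ((hWa0 z (hU1 z hz)).differentiableAt.hasDerivAt)).mul ((hFa2 z (hU1 z hz)).differentiableAt.hasDerivAt))).mul ((hFa0 z (hU1 z hz)).differentiableAt.hasDerivAt)).add (((((hPa0 (ω z) (hωmem z hz)).differentiableAt.hasDerivAt).comp z ((hWa0 z (hU1 z hz)).differentiableAt.hasDerivAt)).mul ((hFa1 z (hU1 z hz)).differentiableAt.hasDerivAt)).mul ((hFa1 z (hU1 z hz)).differentiableAt.hasDerivAt))))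
        (by try simp only [Function.comp_apply, Pi.mul_apply, Pi.add_apply, Pi.sub_apply]; try ring)
    exact H.deriv
  have hc2 : Set.EqOn T2 (fun _ => (0:ℂ)) U := by
    intro z hz
    have h1 : deriv T1 z = 0 := by
      rw [deriv_eqOn_open hUo hc1 hz]; exact deriv_const _ _
    exact ((hd1 hz).symm.trans h1)
  have eq2 : ((((lam:ℂ) * (((((deriv (deriv (deriv (F))) 0) * (F 0)) + ((deriv (deriv (F)) 0) * (deriv (F) 0))) + (((deriv (deriv (F)) 0) * (deriv (F) 0)) + ((deriv (F) 0) * (deriv (deriv (F)) 0)))) + (((((deriv (deriv (deriv (F))) 0) + ((deriv (deriv (deriv (F))) 0) + ((0:ℂ) * (deriv (deriv (deriv (deriv (F)))) 0)))) * (F 0)) + (((deriv (deriv (F)) 0) + ((0:ℂ) * (deriv (deriv (deriv (F))) 0))) * (deriv (F) 0))) + ((((deriv (deriv (F)) 0) + ((0:ℂ) * (deriv (deriv (deriv (F))) 0))) * (deriv (F) 0)) + (((0:ℂ) * (deriv (deriv (F)) 0)) * (deriv (deriv (F)) 0)))))) + ((1-(lam:ℂ)) * (((((deriv (deriv (F))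 0) + ((deriv (deriv (F)) 0) + ((0:ℂ) * (deriv (deriv (deriv (F))) 0)))) * (deriv (F) 0)) + (((deriv (F) 0) + ((0:ℂ) * (deriv (deriv (F)) 0))) * (deriv (deriv (F)) 0))) + ((((deriv (F) 0) + ((0:ℂ) * (deriv (deriv (F)) 0))) * (deriv (deriv (F)) 0)) + (((0:ℂ) * (deriv (F) 0)) * (deriv (deriv (deriv (F))) 0)))))) - ((((((((((deriv (deriv (φ)) (ω 0)) * (deriv (ω) 0)) * (deriv (ω) 0)) + ((deriv (φ) (ω 0)) * (deriv (deriv (ω)) 0))) * (deriv (F) 0)) + (((deriv (φ) (ω 0)) * (deriv (ω) 0)) * (deriv (deriv (F)) 0))) + ((((deriv (φ) (ω 0)) * (deriv (ω) 0)) * (deriv (deriv (F)) 0)) + ((φ (ω 0)) * (deriv (deriv (deriv (F))) 0)))) * (F 0)) + (((((deriv (φ) (ω 0)) * (deriv (ω) 0)) * (deriv (F) 0)) + ((φ (ω 0)) * (deriv (deriv (F)) 0))) * (deriv (F) 0))) + ((((((deriv (φ) (ω 0)) * (deriv (ω) 0)) * (deriv (F) 0)) + ((φ (ω 0)) * (deriv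 (deriv (F)) 0))) * (deriv (F) 0)) + (((φ (ω 0)) * (deriv (F) 0)) * (deriv (deriv (F)) 0))))) = 0 := hc2 h0U
  have h3 : deriv T2 0 = 0 := by
    rw [deriv_eqOn_open hUo hc2 h0U]; exact deriv_const _ _
  have H3 : HasDerivAt T2 (((((lam:ℂ) * ((((((deriv (deriv (deriv (deriv (F)))) 0) * (F 0)) + ((deriv (deriv (deriv (F))) 0) * (deriv (F) 0))) + (((deriv (deriv (deriv (F))) 0) * (deriv (F) 0)) + ((deriv (deriv (F)) 0) * (deriv (deriv (F)) 0)))) + ((((deriv (deriv (deriv (F))) 0) * (deriv (F) 0)) + ((deriv (deriv (F)) 0) * (deriv (deriv (F)) 0))) + (((deriv (deriv (F)) 0) * (deriv (deriv (F)) 0)) + ((deriv (F) 0) * (deriv (deriv (deriv (F))) 0))))) + ((((((deriv (deriv (deriv (deriv (F)))) 0) + ((deriv (deriv (deriv (deriv (F)))) 0) + (deriv (deriv (deriv (deriv (F)))) 0))) * (F 0)) + (((deriv (deriv (deriv (F))) 0) + (deriv (deriv (deriv (F))) 0)) * (deriv (F) 0))) + ((((deriv (deriv (deriv (F))) 0)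 + (deriv (deriv (deriv (F))) 0)) * (deriv (F) 0)) + ((deriv (deriv (F)) 0) * (deriv (deriv (F)) 0)))) + (((((deriv (deriv (deriv (F))) 0) + (deriv (deriv (deriv (F))) 0)) * (deriv (F) 0)) + ((deriv (deriv (F)) 0) * (deriv (deriv (F)) 0))) + ((deriv (deriv (F)) 0) * (deriv (deriv (F)) 0)))))) + ((1-(lam:ℂ)) * ((((((deriv (deriv (deriv (F))) 0) + ((deriv (deriv (deriv (F))) 0) + (deriv (deriv (deriv (F))) 0))) * (deriv (F) 0)) + (((deriv (deriv (F)) 0) + (deriv (deriv (F)) 0)) * (deriv (deriv (F)) 0))) + ((((deriv (deriv (F)) 0) + (deriv (deriv (F)) 0)) * (deriv (deriv (F)) 0)) + ((deriv (F) 0) * (deriv (deriv (deriv (F))) 0)))) + (((((deriv (deriv (F)) 0) + (deriv (deriv (F)) 0)) * (deriv (deriv (F)) 0)) + ((deriv (F) 0) * (deriv (deriv (deriv (F))) 0))) + ((deriv (F) 0) * (deriv (deriv (deriv (F))) 0)))))) - (((((((((((((((deriv (deriv (deriv (φ))) (ω 0)) * (deriv (ω) 0)) * (deriv (ω) 0))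 + ((deriv (deriv (φ)) (ω 0)) * (deriv (deriv (ω)) 0))) * (deriv (ω) 0)) + (((deriv (deriv (φ)) (ω 0)) * (deriv (ω) 0)) * (deriv (deriv (ω)) 0))) + ((((deriv (deriv (φ)) (ω 0)) * (deriv (ω) 0)) * (deriv (deriv (ω)) 0)) + ((deriv (φ) (ω 0)) * (deriv (deriv (deriv (ω))) 0)))) * (deriv (F) 0)) + (((((deriv (deriv (φ)) (ω 0)) * (deriv (ω) 0)) * (deriv (ω) 0)) + ((deriv (φ) (ω 0)) * (deriv (deriv (ω)) 0))) * (deriv (deriv (F)) 0))) + ((((((deriv (deriv (φ)) (ω 0)) * (deriv (ω) 0)) * (deriv (ω) 0)) + ((deriv (φ) (ω 0)) * (deriv (deriv (ω)) 0))) * (deriv (deriv (F)) 0)) + (((deriv (φ) (ω 0)) * (deriv (ω) 0)) * (deriv (deriv (deriv (F))) 0)))) + (((((((deriv (deriv (φ)) (ω 0)) * (deriv (ω) 0)) * (deriv (ω) 0)) + ((deriv (φ) (ω 0)) * (deriv (deriv (ω)) 0))) * (deriv (deriv (F)) 0)) + (((deriv (φ) (ω 0)) * (deriv (ω) 0)) *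 (deriv (deriv (deriv (F))) 0))) + ((((deriv (φ) (ω 0)) * (deriv (ω) 0)) * (deriv (deriv (deriv (F))) 0)) + ((φ (ω 0)) * (deriv (deriv (deriv (deriv (F)))) 0))))) * (F 0)) + ((((((((deriv (deriv (φ)) (ω 0)) * (deriv (ω) 0)) * (deriv (ω) 0)) + ((deriv (φ) (ω 0)) * (deriv (deriv (ω)) 0))) * (deriv (F) 0)) + (((deriv (φ) (ω 0)) * (deriv (ω) 0)) * (deriv (deriv (F)) 0))) + ((((deriv (φ) (ω 0)) * (deriv (ω) 0)) * (deriv (deriv (F)) 0)) + ((φ (ω 0)) * (deriv (deriv (deriv (F))) 0)))) * (deriv (F) 0))) + (((((((((deriv (deriv (φ)) (ω 0)) * (deriv (ω) 0)) * (deriv (ω) 0)) + ((deriv (φ) (ω 0)) * (deriv (deriv (ω)) 0))) * (deriv (F) 0)) + (((deriv (φ) (ω 0)) * (deriv (ω) 0)) * (deriv (deriv (F)) 0))) + ((((deriv (φ) (ω 0)) * (deriv (ω) 0)) * (deriv (deriv (F)) 0)) + ((φ (ω 0)) * (deriv (deriv (deriv (F))) 0)))) * (deriv (F) 0)) + (((((deriv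 (φ) (ω 0)) * (deriv (ω) 0)) * (deriv (F) 0)) + ((φ (ω 0)) * (deriv (deriv (F)) 0))) * (deriv (deriv (F)) 0)))) + ((((((((((deriv (deriv (φ)) (ω 0)) * (deriv (ω) 0)) * (deriv (ω) 0)) + ((deriv (φ) (ω 0)) * (deriv (deriv (ω)) 0))) * (deriv (F) 0)) + (((deriv (φ) (ω 0)) * (deriv (ω) 0)) * (deriv (deriv (F)) 0))) + ((((deriv (φ) (ω 0)) * (deriv (ω) 0)) * (deriv (deriv (F)) 0)) + ((φ (ω 0)) * (deriv (deriv (deriv (F))) 0)))) * (deriv (F) 0)) + (((((deriv (φ) (ω 0)) * (deriv (ω) 0)) * (deriv (F) 0)) + ((φ (ω 0)) * (deriv (deriv (F)) 0))) * (deriv (deriv (F)) 0))) + ((((((deriv (φ) (ω 0)) * (deriv (ω) 0)) * (deriv (F) 0)) + ((φ (ω 0)) * (deriv (deriv (F)) 0))) * (deriv (deriv (F)) 0)) + (((φ (ω 0)) * (deriv (F) 0)) * (deriv (deriv (deriv (F))) 0))))))) 0 := by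
    rw [hT2def]
    exact HasDerivAt.congr_deriv
      ((((hasDerivAt_const 0 ((lam:ℂ))).mul ((((((hFa3 0 (hU1 0 h0U)).differentiableAt.hasDerivAt).mul ((hFa0 0 (hU1 0 h0U)).differentiableAt.hasDerivAt)).add (((hFa2 0 (hU1 0 h0U)).differentiableAt.hasDerivAt).mul ((hFa1 0 (hU1 0 h0U)).differentiableAt.hasDerivAt))).add ((((hFa2 0 (hU1 0 h0U)).differentiableAt.hasDerivAt).mul ((hFa1 0 (hU1 0 h0U)).differentiableAt.hasDerivAt)).add (((hFa1 0 (hU1 0 h0U)).differentiableAt.hasDerivAt).mul ((hFa2 0 (hU1 0 h0U)).differentiableAt.hasDerivAt)))).add ((((((hFa3 0 (hU1 0 h0U)).differentiableAt.hasDerivAt).add (((hFa3 0 (hU1 0 h0U)).differentiableAt.hasDerivAt).add ((hasDerivAt_id' 0).mul ((hFa4 0 (hU1 0 h0U)).differentiableAt.hasDerivAt)))).mul ((hFa0 0 (hU1 0 h0U)).differentiableAt.hasDerivAt)).add ((((hFa2 0 (hU1 0 h0U)).differentiableAt.hasDerivAt).add ((hasDerivAt_id' 0).mul ((hFa3 0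 (hU1 0 h0U)).differentiableAt.hasDerivAt))).mul ((hFa1 0 (hU1 0 h0U)).differentiableAt.hasDerivAt))).add (((((hFa2 0 (hU1 0 h0U)).differentiableAt.hasDerivAt).add ((hasDerivAt_id' 0).mul ((hFa3 0 (hU1 0 h0U)).differentiableAt.hasDerivAt))).mul ((hFa1 0 (hU1 0 h0U)).differentiableAt.hasDerivAt)).add (((hasDerivAt_id' 0).mul ((hFa2 0 (hU1 0 h0U)).differentiableAt.hasDerivAt)).mul ((hFa2 0 (hU1 0 h0U)).differentiableAt.hasDerivAt)))))).add ((hasDerivAt_const 0 ((1-(lam:ℂ)))).mul ((((((hFa2 0 (hU1 0 h0U)).differentiableAt.hasDerivAt).add (((hFa2 0 (hU1 0 h0U)).differentiableAt.hasDerivAt).add ((hasDerivAt_id' 0).mul ((hFa3 0 (hU1 0 h0U)).differentiableAt.hasDerivAt)))).mul ((hFa1 0 (hU1 0 h0U)).differentiableAt.hasDerivAt)).add ((((hFa1 0 (hU1 0 h0U)).differentiableAt.hasDerivAt).add ((hasDerivAt_id' 0).mul ((hFa2 0 (hU1 0 h0U)).differentiableAt.hasDerivAt))).mul ((hFa2 0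 (hU1 0 h0U)).differentiableAt.hasDerivAt))).add (((((hFa1 0 (hU1 0 h0U)).differentiableAt.hasDerivAt).add ((hasDerivAt_id' 0).mul ((hFa2 0 (hU1 0 h0U)).differentiableAt.hasDerivAt))).mul ((hFa2 0 (hU1 0 h0U)).differentiableAt.hasDerivAt)).add (((hasDerivAt_id' 0).mul ((hFa1 0 (hU1 0 h0U)).differentiableAt.hasDerivAt)).mul ((hFa3 0 (hU1 0 h0U)).differentiableAt.hasDerivAt)))))).sub ((((((((((((hPa2 (ω 0) (hωmem 0 h0U)).differentiableAt.hasDerivAt).comp 0 ((hWa0 0 (hU1 0 h0U)).differentiableAt.hasDerivAt)).mul ((hWa1 0 (hU1 0 h0U)).differentiableAt.hasDerivAt)).mul ((hWa1 0 (hU1 0 h0U)).differentiableAt.hasDerivAt)).add ((((hPa1 (ω 0) (hωmem 0 h0U)).differentiableAt.hasDerivAt).comp 0 ((hWa0 0 (hU1 0 h0U)).differentiableAt.hasDerivAt)).mul ((hWa2 0 (hU1 0 h0U)).differentiableAt.hasDerivAt))).mul ((hFa1 0 (hU1 0 h0U)).differentiableAt.hasDerivAt)).add (((((hPa1 (ω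 0) (hωmem 0 h0U)).differentiableAt.hasDerivAt).comp 0 ((hWa0 0 (hU1 0 h0U)).differentiableAt.hasDerivAt)).mul ((hWa1 0 (hU1 0 h0U)).differentiableAt.hasDerivAt)).mul ((hFa2 0 (hU1 0 h0U)).differentiableAt.hasDerivAt))).add ((((((hPa1 (ω 0) (hωmem 0 h0U)).differentiableAt.hasDerivAt).comp 0 ((hWa0 0 (hU1 0 h0U)).differentiableAt.hasDerivAt)).mul ((hWa1 0 (hU1 0 h0U)).differentiableAt.hasDerivAt)).mul ((hFa2 0 (hU1 0 h0U)).differentiableAt.hasDerivAt)).add ((((hPa0 (ω 0) (hωmem 0 h0U)).differentiableAt.hasDerivAt).comp 0 ((hWa0 0 (hU1 0 h0U)).differentiableAt.hasDerivAt)).mul ((hFa3 0 (hU1 0 h0U)).differentiableAt.hasDerivAt)))).mul ((hFa0 0 (hU1 0 h0U)).differentiableAt.hasDerivAt)).add (((((((hPa1 (ω 0) (hωmem 0 h0U)).differentiableAt.hasDerivAt).comp 0 ((hWa0 0 (hU1 0 h0U)).differentiableAt.hasDerivAt)).mul ((hWa1 0 (hU1 0 h0U)).differentiableAt.hasDerivAt)).mul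 ((hFa1 0 (hU1 0 h0U)).differentiableAt.hasDerivAt)).add ((((hPa0 (ω 0) (hωmem 0 h0U)).differentiableAt.hasDerivAt).comp 0 ((hWa0 0 (hU1 0 h0U)).differentiableAt.hasDerivAt)).mul ((hFa2 0 (hU1 0 h0U)).differentiableAt.hasDerivAt))).mul ((hFa1 0 (hU1 0 h0U)).differentiableAt.hasDerivAt))).add ((((((((hPa1 (ω 0) (hωmem 0 h0U)).differentiableAt.hasDerivAt).comp 0 ((hWa0 0 (hU1 0 h0U)).differentiableAt.hasDerivAt)).mul ((hWa1 0 (hU1 0 h0U)).differentiableAt.hasDerivAt)).mul ((hFa1 0 (hU1 0 h0U)).differentiableAt.hasDerivAt)).add ((((hPa0 (ω 0) (hωmem 0 h0U)).differentiableAt.hasDerivAt).comp 0 ((hWa0 0 (hU1 0 h0U)).differentiableAt.hasDerivAt)).mul ((hFa2 0 (hU1 0 h0U)).differentiableAt.hasDerivAt))).mul ((hFa1 0 (hU1 0 h0U)).differentiableAt.hasDerivAt)).add (((((hPa0 (ω 0) (hωmem 0 h0U)).differentiableAt.hasDerivAt).comp 0 ((hWa0 0 (hU1 0 h0U)).differentiableAt.hasDerivAt)).mul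 ((hFa1 0 (hU1 0 h0U)).differentiableAt.hasDerivAt)).mul ((hFa2 0 (hU1 0 h0U)).differentiableAt.hasDerivAt)))))
      (by try simp only [Function.comp_apply, Pi.mul_apply, Pi.add_apply, Pi.sub_apply]; try ring)
  have eq3 : ((((lam:ℂ) * ((((((deriv (deriv (deriv (deriv (F)))) 0) * (F 0)) + ((deriv (deriv (deriv (F))) 0) * (deriv (F) 0))) + (((deriv (deriv (deriv (F))) 0) * (deriv (F) 0)) + ((deriv (deriv (F)) 0) * (deriv (deriv (F)) 0)))) + ((((deriv (deriv (deriv (F))) 0) * (deriv (F) 0)) + ((deriv (deriv (F)) 0) * (deriv (deriv (F)) 0))) + (((deriv (deriv (F)) 0) * (deriv (deriv (F)) 0)) + ((deriv (F) 0) * (deriv (deriv (deriv (F))) 0))))) + ((((((deriv (deriv (deriv (deriv (F)))) 0) + ((deriv (deriv (deriv (deriv (F)))) 0) + (deriv (deriv (deriv (deriv (F)))) 0))) * (F 0)) + (((deriv (deriv (deriv (F))) 0) + (deriv (deriv (deriv (F))) 0)) * (deriv (F) 0))) + ((((deriv (deriv (deriv (F))) 0) + (deriv (deriv (deriv (F)))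 0)) * (deriv (F) 0)) + ((deriv (deriv (F)) 0) * (deriv (deriv (F)) 0)))) + (((((deriv (deriv (deriv (F))) 0) + (deriv (deriv (deriv (F))) 0)) * (deriv (F) 0)) + ((deriv (deriv (F)) 0) * (deriv (deriv (F)) 0))) + ((deriv (deriv (F)) 0) * (deriv (deriv (F)) 0)))))) + ((1-(lam:ℂ)) * ((((((deriv (deriv (deriv (F))) 0) + ((deriv (deriv (deriv (F))) 0) + (deriv (deriv (deriv (F))) 0))) * (deriv (F) 0)) + (((deriv (deriv (F)) 0) + (deriv (deriv (F)) 0)) * (deriv (deriv (F)) 0))) + ((((deriv (deriv (F)) 0) + (deriv (deriv (F)) 0)) * (deriv (deriv (F)) 0)) + ((deriv (F) 0) * (deriv (deriv (deriv (F))) 0)))) + (((((deriv (deriv (F)) 0) + (deriv (deriv (F)) 0)) * (deriv (deriv (F)) 0)) + ((deriv (F) 0) * (deriv (deriv (deriv (F))) 0))) + ((deriv (F) 0) * (deriv (deriv (deriv (F))) 0)))))) - (((((((((((((((deriv (deriv (deriv (φ))) (ω 0)) * (deriv (ω) 0)) * (deriv (ω) 0)) + ((deriv (deriv (φ)) (ω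 0)) * (deriv (deriv (ω)) 0))) * (deriv (ω) 0)) + (((deriv (deriv (φ)) (ω 0)) * (deriv (ω) 0)) * (deriv (deriv (ω)) 0))) + ((((deriv (deriv (φ)) (ω 0)) * (deriv (ω) 0)) * (deriv (deriv (ω)) 0)) + ((deriv (φ) (ω 0)) * (deriv (deriv (deriv (ω))) 0)))) * (deriv (F) 0)) + (((((deriv (deriv (φ)) (ω 0)) * (deriv (ω) 0)) * (deriv (ω) 0)) + ((deriv (φ) (ω 0)) * (deriv (deriv (ω)) 0))) * (deriv (deriv (F)) 0))) + ((((((deriv (deriv (φ)) (ω 0)) * (deriv (ω) 0)) * (deriv (ω) 0)) + ((deriv (φ) (ω 0)) * (deriv (deriv (ω)) 0))) * (deriv (deriv (F)) 0)) + (((deriv (φ) (ω 0)) * (deriv (ω) 0)) * (deriv (deriv (deriv (F))) 0)))) + (((((((deriv (deriv (φ)) (ω 0)) * (deriv (ω) 0)) * (deriv (ω) 0)) + ((deriv (φ) (ω 0)) * (deriv (deriv (ω)) 0))) * (deriv (deriv (F)) 0)) + (((deriv (φ) (ω 0)) * (deriv (ω) 0)) * (deriv (deriv (deriv (F))) 0)))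 + ((((deriv (φ) (ω 0)) * (deriv (ω) 0)) * (deriv (deriv (deriv (F))) 0)) + ((φ (ω 0)) * (deriv (deriv (deriv (deriv (F)))) 0))))) * (F 0)) + ((((((((deriv (deriv (φ)) (ω 0)) * (deriv (ω) 0)) * (deriv (ω) 0)) + ((deriv (φ) (ω 0)) * (deriv (deriv (ω)) 0))) * (deriv (F) 0)) + (((deriv (φ) (ω 0)) * (deriv (ω) 0)) * (deriv (deriv (F)) 0))) + ((((deriv (φ) (ω 0)) * (deriv (ω) 0)) * (deriv (deriv (F)) 0)) + ((φ (ω 0)) * (deriv (deriv (deriv (F))) 0)))) * (deriv (F) 0))) + (((((((((deriv (deriv (φ)) (ω 0)) * (deriv (ω) 0)) * (deriv (ω) 0)) + ((deriv (φ) (ω 0)) * (deriv (deriv (ω)) 0))) * (deriv (F) 0)) + (((deriv (φ) (ω 0)) * (deriv (ω) 0)) * (deriv (deriv (F)) 0))) + ((((deriv (φ) (ω 0)) * (deriv (ω) 0)) * (deriv (deriv (F)) 0)) + ((φ (ω 0)) * (deriv (deriv (deriv (F))) 0)))) * (deriv (F) 0)) + (((((deriv (φ) (ω 0)) * (deriv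 (ω) 0)) * (deriv (F) 0)) + ((φ (ω 0)) * (deriv (deriv (F)) 0))) * (deriv (deriv (F)) 0)))) + ((((((((((deriv (deriv (φ)) (ω 0)) * (deriv (ω) 0)) * (deriv (ω) 0)) + ((deriv (φ) (ω 0)) * (deriv (deriv (ω)) 0))) * (deriv (F) 0)) + (((deriv (φ) (ω 0)) * (deriv (ω) 0)) * (deriv (deriv (F)) 0))) + ((((deriv (φ) (ω 0)) * (deriv (ω) 0)) * (deriv (deriv (F)) 0)) + ((φ (ω 0)) * (deriv (deriv (deriv (F))) 0)))) * (deriv (F) 0)) + (((((deriv (φ) (ω 0)) * (deriv (ω) 0)) * (deriv (F) 0)) + ((φ (ω 0)) * (deriv (deriv (F)) 0))) * (deriv (deriv (F)) 0))) + ((((((deriv (φ) (ω 0)) * (deriv (ω) 0)) * (deriv (F) 0)) + ((φ (ω 0)) * (deriv (deriv (F)) 0))) * (deriv (deriv (F)) 0)) + (((φ (ω 0)) * (deriv (F) 0)) * (deriv (deriv (deriv (F))) 0)))))) = 0 := by rw [← H3.deriv]; exact h3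
  simp only [hω0, hφ0, hF0, hF1] at eq2 eq3
  rw [show iteratedDeriv 2 F 0 = deriv (deriv F) 0 by
      rw [iteratedDeriv_succ, iteratedDeriv_one],
    show iteratedDeriv 3 F 0 = deriv (deriv (deriv F)) 0 by
      rw [iteratedDeriv_succ, iteratedDeriv_succ, iteratedDeriv_one],
    show iteratedDeriv 2 ω 0 = deriv (deriv ω) 0 by
      rw [iteratedDeriv_succ, iteratedDeriv_one],
    show iteratedDeriv 2 φ 0 = deriv (deriv φ) 0 by
      rw [iteratedDeriv_succ, iteratedDeriv_one]]
  constructor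
  · linear_combination eq2
  · linear_combination 2*eq3 - 9*(deriv (deriv F) 0)*eq2

set_option maxHeartbeats 3000000 in
lemma inverse_coeffs (f g : ℂ → ℂ)
    (hfd : DifferentiableOn ℂ f (ball 0 1)) (hf0 : f 0 = 0) (hf1 : deriv f 0 = 1)
    (hgd : DifferentiableOn ℂ g (ball 0 1)) (hg0 : g 0 = 0) (hg1 : deriv g 0 = 1)
    (hinv : ∀ w : ℂ, (norm : ℂ → ℝ) w < 1/4 → f (g w) = w) :
    iteratedDeriv 2 g 0 = - iteratedDeriv 2 f 0 ∧
    iteratedDeriv 3 g 0 = 3 * (iteratedDeriv 2 f 0)^2 - iteratedDeriv 3 f 0 := by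
  have h01 : (0:ℂ) ∈ ball (0:ℂ) 1 := mem_ball_self one_pos
  have hQa0 : AnalyticOnNhd ℂ f (ball 0 1) := hfd.analyticOnNhd isOpen_ball
  have hQa1 : AnalyticOnNhd ℂ (deriv f) (ball 0 1) := hQa0.deriv
  have hQa2 : AnalyticOnNhd ℂ (deriv (deriv f)) (ball 0 1) := hQa1.deriv
  have hQa3 : AnalyticOnNhd ℂ (deriv (deriv (deriv f))) (ball 0 1) := hQa2.deriv
  have hGa0 : AnalyticOnNhd ℂ g (ball 0 1) := hgd.analyticOnNhd isOpen_ball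
  have hGa1 : AnalyticOnNhd ℂ (deriv g) (ball 0 1) := hGa0.deriv
  have hGa2 : AnalyticOnNhd ℂ (deriv (deriv g)) (ball 0 1) := hGa1.deriv
  have hGa3 : AnalyticOnNhd ℂ (deriv (deriv (deriv g))) (ball 0 1) := hGa2.deriv
  have hball : ∀ᶠ w in 𝓝 (0:ℂ), w ∈ ball (0:ℂ) 1 :=
    Filter.eventually_of_mem (isOpen_ball.mem_nhds h01) (fun x hx => hx)
  have hball4 : ∀ᶠ w in 𝓝 (0:ℂ), (norm : ℂ → ℝ) w < 1/4 := by
    have : ∀ᶠ w in 𝓝 (0:ℂ), w ∈ ball (0:ℂ) (1/4) :=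
      Filter.eventually_of_mem (isOpen_ball.mem_nhds (mem_ball_self (by norm_num))) (fun x hx => hx)
    exact this.mono (fun w hw => by simpa [Complex.dist_eq] using hw)
  have hgball : ∀ᶠ w in 𝓝 (0:ℂ), g w ∈ ball (0:ℂ) 1 := by
    have hc : ContinuousAt g 0 := ((hGa0 0 h01).differentiableAt).continuousAt
    have : ball (0:ℂ) 1 ∈ 𝓝 (g 0) := by rw [hg0]; exact isOpen_ball.mem_nhds h01
    exact hc.eventually_mem this
  obtain ⟨r, hr, hrp⟩ := Metric.eventually_nhds_iff_ball.mp ((hball.and hball4).and hgball)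
  set U : Set ℂ := ball (0:ℂ) r with hUdef
  have hUo : IsOpen U := isOpen_ball
  have h0U : (0:ℂ) ∈ U := mem_ball_self hr
  have hU1 : ∀ z ∈ U, z ∈ ball (0:ℂ) 1 := fun z hz => (hrp z hz).1.1
  have hU4 : ∀ z ∈ U, (norm : ℂ → ℝ) z < 1/4 := fun z hz => (hrp z hz).1.2
  have hUg : ∀ z ∈ U, g z ∈ ball (0:ℂ) 1 := fun z hz => (hrp z hz).2
  set T0 : ℂ → ℂ := fun z => ((f (g z)) - z) with hT0def
  have hc0 : Set.EqOn T0 (fun _ => (0:ℂ)) U := by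
    intro z hz
    have h := hinv z (hU4 z hz)
    simp only [hT0def]
    rw [h, sub_self]
  set T1 : ℂ → ℂ := fun z => (((deriv (f) (g z)) * (deriv (g) z)) - (1:ℂ)) with hT1def
  have hd0 : Set.EqOn (deriv T0) T1 U := by
    intro z hz
    have H : HasDerivAt T0 ((((deriv (f) (g z)) * (deriv (g) z)) - (1:ℂ))) z := by
      rw [hT0def]
      exact HasDerivAt.congr_deriv
        ((((hQa0 (g z) (hUg z hz)).differentiableAt.hasDerivAt).comp z ((hGa0 z (hU1 z hz)).differentiableAt.hasDerivAt)).sub (hasDerivAt_id' z))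
        (by try simp only [Function.comp_apply]; try ring)
    exact H.deriv
  have hc1 : Set.EqOn T1 (fun _ => (0:ℂ)) U := by
    intro z hz
    have h1 : deriv T0 z = 0 := by
      rw [deriv_eqOn_open hUo hc0 hz]; exact deriv_const _ _
    exact ((hd0 hz).symm.trans h1)
  set T2 : ℂ → ℂ := fun z => ((((deriv (deriv (f)) (g z)) * (deriv (g) z)) * (deriv (g) z)) + ((deriv (f) (g z)) * (deriv (deriv (g)) z))) with hT2def
  have hd1 : Set.EqOn (deriv T1) T2 U := by
    intro z hz
    have H : HasDerivAt T1 (((((deriv (deriv (f)) (g z)) * (deriv (g) z)) * (deriv (g) z)) + ((deriv (f) (g z)) * (deriv (deriv (g)) z)))) z := by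
      rw [hT1def]
      exact HasDerivAt.congr_deriv
        (((((hQa1 (g z) (hUg z hz)).differentiableAt.hasDerivAt).comp z ((hGa0 z (hU1 z hz)).differentiableAt.hasDerivAt)).mul ((hGa1 z (hU1 z hz)).differentiableAt.hasDerivAt)).sub (hasDerivAt_const z ((1:ℂ))))
        (by try simp only [Function.comp_apply]; try ring)
    exact H.deriv
  have hc2 : Set.EqOn T2 (fun _ => (0:ℂ)) U := by
    intro z hz
    have h1 : deriv T1 z = 0 := by
      rw [deriv_eqOn_open hUo hc1 hz]; exact deriv_const _ _
    exact ((hd1 hz).symm.trans h1)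
  have eq2 : ((((deriv (deriv (f)) (g 0)) * (deriv (g) 0)) * (deriv (g) 0)) + ((deriv (f) (g 0)) * (deriv (deriv (g)) 0))) = 0 := hc2 h0U
  have h3 : deriv T2 0 = 0 := by
    rw [deriv_eqOn_open hUo hc2 h0U]; exact deriv_const _ _
  have H3 : HasDerivAt T2 ((((((((deriv (deriv (deriv (f))) (g 0)) * (deriv (g) 0)) * (deriv (g) 0)) + ((deriv (deriv (f)) (g 0)) * (deriv (deriv (g)) 0))) * (deriv (g) 0)) + (((deriv (deriv (f)) (g 0)) * (deriv (g) 0)) * (deriv (deriv (g)) 0))) + ((((deriv (deriv (f)) (g 0)) * (deriv (g) 0)) * (deriv (deriv (g)) 0)) + ((deriv (f) (g 0)) * (deriv (deriv (deriv (g))) 0))))) 0 := by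
    rw [hT2def]
    exact HasDerivAt.congr_deriv
      ((((((hQa2 (g 0) (hUg 0 h0U)).differentiableAt.hasDerivAt).comp 0 ((hGa0 0 (hU1 0 h0U)).differentiableAt.hasDerivAt)).mul ((hGa1 0 (hU1 0 h0U)).differentiableAt.hasDerivAt)).mul ((hGa1 0 (hU1 0 h0U)).differentiableAt.hasDerivAt)).add ((((hQa1 (g 0) (hUg 0 h0U)).differentiableAt.hasDerivAt).comp 0 ((hGa0 0 (hU1 0 h0U)).differentiableAt.hasDerivAt)).mul ((hGa2 0 (hU1 0 h0U)).differentiableAt.hasDerivAt)))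
      (by try simp only [Function.comp_apply, Pi.mul_apply, Pi.add_apply, Pi.sub_apply]; try ring)
  have eq3 : (((((((deriv (deriv (deriv (f))) (g 0)) * (deriv (g) 0)) * (deriv (g) 0)) + ((deriv (deriv (f)) (g 0)) * (deriv (deriv (g)) 0))) * (deriv (g) 0)) + (((deriv (deriv (f)) (g 0)) * (deriv (g) 0)) * (deriv (deriv (g)) 0))) + ((((deriv (deriv (f)) (g 0)) * (deriv (g) 0)) * (deriv (deriv (g)) 0)) + ((deriv (f) (g 0)) * (deriv (deriv (deriv (g))) 0)))) = 0 := by rw [← H3.deriv]; exact h3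
  simp only [hg0, hf0, hf1, hg1] at eq2 eq3
  rw [show iteratedDeriv 2 g 0 = deriv (deriv g) 0 by
      rw [iteratedDeriv_succ, iteratedDeriv_one],
    show iteratedDeriv 3 g 0 = deriv (deriv (deriv g)) 0 by
      rw [iteratedDeriv_succ, iteratedDeriv_succ, iteratedDeriv_one],
    show iteratedDeriv 2 f 0 = deriv (deriv f) 0 by
      rw [iteratedDeriv_succ, iteratedDeriv_one],
    show iteratedDeriv 3 f 0 = deriv (deriv (deriv f)) 0 by
      rw [iteratedDeriv_succ, iteratedDeriv_succ, iteratedDeriv_one]]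
  constructor
  · linear_combination eq2
  · linear_combination eq3 - 3*(deriv (deriv f) 0)*eq2

/-- `f` is bi-univalent on the unit disk, with `g` the univalent analytic
continuation of `f⁻¹` to the unit disk. -/
def IsBiUnivalent (f g : ℂ → ℂ) : Prop :=
  DifferentiableOn ℂ f (ball 0 1) ∧ f 0 = 0 ∧ deriv f 0 = 1 ∧
  Set.InjOn f (ball 0 1) ∧
  DifferentiableOn ℂ g (ball 0 1) ∧ Set.InjOn g (ball 0 1) ∧
  ∀ w : ℂ, ‖w‖ < 1/4 → f (g w) = w

/-- `φ` is an analytic univalent function on the unit disk with positive real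
part there, normalized by `φ 0 = 1`. -/
def IsMaMinda (φ : ℂ → ℂ) : Prop :=
  DifferentiableOn ℂ φ (ball 0 1) ∧ Set.InjOn φ (ball 0 1) ∧ φ 0 = 1 ∧
  ∀ z ∈ ball (0:ℂ) 1, 0 < (φ z).re

/-- Membership in `M^λ(φ)`: `f` is normalized analytic on the unit disk and
`λ(1 + z f''(z)/f'(z)) + (1-λ) z f'(z)/f(z) ≺ φ(z)`. -/
def MemMlam (lam : ℝ) (φ f : ℂ → ℂ) : Prop :=
  DifferentiableOn ℂ f (ball 0 1) ∧ f 0 = 0 ∧ deriv f 0 = 1 ∧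
  ∃ ω : ℂ → ℂ, DifferentiableOn ℂ ω (ball 0 1) ∧ ω 0 = 0 ∧
    (∀ z ∈ ball (0:ℂ) 1, ω z ∈ ball (0:ℂ) 1) ∧
    ∀ z ∈ ball (0:ℂ) 1, z ≠ 0 →
      (lam : ℂ) * (1 + z * iteratedDeriv 2 f z / deriv f z)
        + (1 - (lam : ℂ)) * (z * deriv f z / f z) = φ (ω z)

theorem stmt_7
    (lam : ℝ) (hlam : 0 ≤ lam) (φ f g : ℂ → ℂ)
    (B₁ : ℝ) (B₂ B₃ : ℂ) (hB₁ : 0 < B₁)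
    (hφ : IsMaMinda φ)
    (hφ1 : deriv φ 0 = (B₁:ℂ))
    (hφ2 : iteratedDeriv 2 φ 0 = 2 * B₂)
    (hφ3 : iteratedDeriv 3 φ 0 = 6 * B₃)
    (hbi : IsBiUnivalent f g)
    (hf : MemMlam lam φ f) (hg : MemMlam lam φ g)
    (a : ℕ → ℂ) (ha : ∀ n, a n = iteratedDeriv n f 0 / (n.factorial : ℂ))
    (D₁ : ℂ) (hD₁ : D₁ = (B₁:ℂ)^2 + (1 + (lam:ℂ)) * ((B₁:ℂ) - B₂))
    (hcond : (1 + lam) * B₁ ≤ ‖D₁‖) :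
    ‖a 3‖ ≤ B₁ / (2*(1+2*lam)*(1+lam)*‖D₁‖) * min
      (1/2 * (‖(3+5*(lam:ℂ))*(B₁:ℂ)^2 + (1+(lam:ℂ))^2*((B₁:ℂ)-B₂)‖ + ‖(1+3*(lam:ℂ))*(B₁:ℂ)^2 - (1+(lam:ℂ))^2*((B₁:ℂ)-B₂)‖))
      (‖(1+3*(lam:ℂ))*(B₁:ℂ)^2 - (1+(lam:ℂ))^2*((B₁:ℂ)-B₂)‖ + ‖(1+(lam:ℂ))*(B₁:ℂ)^2 + (1+(lam:ℂ))^2*((B₁:ℂ)-B₂)‖) := by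
  obtain ⟨hfd, hf0, hf1, ω₁, hω₁d, hω₁0, hω₁map, hω₁eq⟩ := hf
  obtain ⟨hgd, hg0, hg1, ω₂, hω₂d, hω₂0, hω₂map, hω₂eq⟩ := hg
  obtain ⟨hφd, hφinj, hφ0, hφpos⟩ := hφ
  obtain ⟨rf1, rf2⟩ := coeff_relations lam φ f ω₁ hfd hf0 hf1 hφd hφ0 hω₁d hω₁0 hω₁map hω₁eq
  obtain ⟨rg1, rg2⟩ := coeff_relations lam φ g ω₂ hgd hg0 hg1 hφd hφ0 hω₂d hω₂0 hω₂map hω₂eq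
  obtain ⟨ic2, ic3⟩ := inverse_coeffs f g hfd hf0 hf1 hgd hg0 hg1 hbi.2.2.2.2.2.2
  obtain ⟨sc1f, sc2f⟩ := schwarz_two ω₁ hω₁d hω₁0 hω₁map
  obtain ⟨sc1g, sc2g⟩ := schwarz_two ω₂ hω₂d hω₂0 hω₂map
  have hDne : D₁ ≠ 0 := by
    intro h
    rw [h, norm_zero] at hcond
    nlinarith
  have ha2 : a 2 = iteratedDeriv 2 f 0 / 2 := by rw [ha 2]; norm_num [Nat.factorial]
  have ha3 : a 3 = iteratedDeriv 3 f 0 / 6 := by rw [ha 3]; norm_num [Nat.factorial]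
  refine final_algebra lam B₁ hlam hB₁ B₂ D₁ (a 2) (a 3) (deriv ω₁ 0)
    (iteratedDeriv 2 ω₁ 0 / 2) (deriv ω₂ 0) (iteratedDeriv 2 ω₂ 0 / 2) hD₁ hDne
    ?_ ?_ ?_ ?_ sc2f sc2g
  · rw [ha2]
    linear_combination (1/2)*rf1 + (deriv ω₁ 0)*hφ1
  · rw [ha2, ha3]
    linear_combination (1/12)*rf2 + (iteratedDeriv 2 ω₁ 0/2)*hφ1 + ((deriv ω₁ 0)^2/2)*hφ2
  · rw [ha2]
    linear_combination (1/2)*rg1 + (deriv ω₂ 0)*hφ1 - ((1+(lam:ℂ))/2)*ic2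
  · rw [ha2, ha3]
    linear_combination (1/12)*rg2 + (iteratedDeriv 2 ω₂ 0/2)*hφ1 + ((deriv ω₂ 0)^2/2)*hφ2
      + ((3*(lam:ℂ)+1)/4)*(iteratedDeriv 2 g 0 - iteratedDeriv 2 f 0)*ic2 - ((1+2*(lam:ℂ))/3)*ic3
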